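/- Let p : ℝ^d → (0,∞) be C³, K : ℝ^d → ℝ^d be C³, u : ℝ^d → ℝ^d be C², and h : ℝ^d → ℝ be C². Suppose that for every x and every j ∈ {1,…,d} both of the following hold. (i) 0 = p ∑_i K_i ∂²p/∂x_i∂x_j + p ∑_i (∂p/∂x_i)(∂K_i/∂x_j) + p² ∂h/∂x_j + p² ∂/∂x_j(∑_i ∂K_i/∂x_i) − (∑_i (∂p/∂x_i)K_i)(∂p/∂x_j). (ii) 0 = p ∑_i u_i ∂²p/∂x_i∂x_j + (p/2) ∑_{i,k} K_i K_k ∂³p/∂x_j∂x_i∂x_k + p ∑_i (∂p/∂x_i)(∂u_i/∂x_j) + p ∑_{i,k} K_i (∂²p/∂x_i∂x_k)(∂K_k/∂x_j) − p² h ∂h/∂x_j + p (∑_i (∂p/∂x_i)K_i) ∂h/∂x_j + p² ∑_i K_i ∂²h/∂x_i∂x_j + p² ∑_i (∂h/∂x_i)(∂K_i/∂x_j) + p (∑_i (∂p/∂x_i)K_i) ∂/∂x_j(∑_i ∂K_i/∂x_i) + p² [ ∂/∂x_j(∑_i ∂u_i/∂x_i) − ∑_{i,k} (∂K_k/∂x_i)(∂²K_i/∂x_j∂x_k)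 ] − (∑_i (∂p/∂x_i)u_i)(∂p/∂x_j) − (1/2)(∑_{i,k} K_i (∂²p/∂x_i∂x_k) K_k)(∂p/∂x_j). Then for every x and every j: −∂/∂x_j [ (1/p) ∑_i ∂(p u_i)/∂x_i ] = ∂/∂x_j [ −(1/2)h² − (1/(2p)) ∑_{i,k} K_i K_k ∂²p/∂x_i∂x_k + (1/2)(∑_i K_i ∂(log p)/∂x_i)² − ∑_{i,k} K_i (∂K_k/∂x_i)(∂(log p)/∂x_k) − ∑_k K_k ∂/∂x_k(∑_i ∂K_i/∂x_i) − (1/2) ∑_{i,k} (∂K_k/∂x_i)(∂K_i/∂x_k) ]. -/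

import Mathlib

/-- Partial derivative `∂f/∂x_i` of a scalar function on `ℝ^d`. -/
noncomputable def pd {d : ℕ} (i : Fin d) (f : (Fin d → ℝ) → ℝ) (x : Fin d → ℝ) : ℝ :=
  fderiv ℝ f x (Pi.single i 1)

section helpers
variable {d : ℕ} {f g : (Fin d → ℝ) → ℝ} {x : Fin d → ℝ} {i : Fin d}

lemma pd_const {c : ℝ} : pd i (fun _ => c) x = 0 := by simp [pd]

lemma pd_add (hf : DifferentiableAt ℝ f x) (hg : DifferentiableAt ℝ g x) :
    pd i (fun y => f y + g y) x = pd i f x + pd i g x := by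
  simp [pd, fderiv_fun_add hf hg]

lemma pd_sub (hf : DifferentiableAt ℝ f x) (hg : DifferentiableAt ℝ g x) :
    pd i (fun y => f y - g y) x = pd i f x - pd i g x := by
  simp [pd, fderiv_fun_sub hf hg]

lemma pd_mul (hf : DifferentiableAt ℝ f x) (hg : DifferentiableAt ℝ g x) :
    pd i (fun y => f y * g y) x = f x * pd i g x + g x * pd i f x := by
  simp [pd, fderiv_fun_mul hf hg]

lemma pd_cmul {c : ℝ} (hg : DifferentiableAt ℝ g x) :
    pd i (fun y => c * g y) x = c * pd i g x := by
  simp [pd, fderiv_const_mul hg]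

lemma pd_sq (hf : DifferentiableAt ℝ f x) :
    pd i (fun y => f y ^ 2) x = 2 * f x * pd i f x := by
  have e : (fun y => f y ^ 2) = fun y => f y * f y := by funext y; ring
  rw [e, pd_mul hf hf]; ring

lemma pd_mul3 {h' : (Fin d → ℝ) → ℝ} (hf : DifferentiableAt ℝ f x)
    (hg : DifferentiableAt ℝ g x) (hh : DifferentiableAt ℝ h' x) :
    pd i (fun y => f y * g y * h' y) x
      = f x * g x * pd i h' x + f x * h' x * pd i g x + g x * h' x * pd i f x := by
  rw [pd_mul (hf.fun_mul hg) hh, pd_mul hf hg]; ring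

lemma pd_sum {ι : Type*} {s : Finset ι} {F : ι → (Fin d → ℝ) → ℝ}
    (h : ∀ a ∈ s, DifferentiableAt ℝ (F a) x) :
    pd i (fun y => ∑ a ∈ s, F a y) x = ∑ a ∈ s, pd i (F a) x := by
  simp [pd, fderiv_fun_sum h]

lemma pd_sum2 {F : Fin d → Fin d → (Fin d → ℝ) → ℝ}
    (hF : ∀ a b, DifferentiableAt ℝ (F a b) x) :
    pd i (fun y => ∑ a, ∑ b, F a b y) x = ∑ a, ∑ b, pd i (F a b) x := by
  rw [pd_sum (fun a _ => DifferentiableAt.fun_sum fun b _ => hF a b)]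
  exact Finset.sum_congr rfl fun a _ => pd_sum (fun b _ => hF a b)

lemma pd_inv (hg : DifferentiableAt ℝ g x) (hgx : g x ≠ 0) :
    pd i (fun y => (g y)⁻¹) x = -pd i g x / g x ^ 2 := by
  have h1 : HasFDerivAt (fun y => (g y)⁻¹) ((-(g x ^ 2)⁻¹) • fderiv ℝ g x) x :=
    (hasDerivAt_inv hgx).comp_hasFDerivAt x hg.hasFDerivAt
  simp [pd, h1.fderiv]
  field_simp

lemma pd_div (hf : DifferentiableAt ℝ f x) (hg : DifferentiableAt ℝ g x) (hgx : g x ≠ 0) :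
    pd i (fun y => f y / g y) x = (pd i f x * g x - f x * pd i g x) / g x ^ 2 := by
  have e : (fun y => f y / g y) = fun y => f y * (g y)⁻¹ := by
    funext y; rw [div_eq_mul_inv]
  rw [e, pd_mul hf (hg.fun_inv hgx), pd_inv hg hgx]
  field_simp
  ring

lemma pd_log (hf : DifferentiableAt ℝ f x) (hx : f x ≠ 0) :
    pd i (fun y => Real.log (f y)) x = pd i f x / f x := by
  simp [pd, fderiv.log hf hx]
  ring

lemma contDiff_pd {n m : WithTop ℕ∞} (hf : ContDiff ℝ n f) (hmn : m + 1 ≤ n) (i : Fin d) :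
    ContDiff ℝ m (pd i f) :=
  (hf.fderiv_right hmn).clm_apply contDiff_const

lemma pd_comm {n : WithTop ℕ∞} (hf : ContDiff ℝ n f) (hn : 2 ≤ n) (i k : Fin d) (x : Fin d → ℝ) :
    pd i (pd k f) x = pd k (pd i f) x := by
  have hd : DifferentiableAt ℝ (fderiv ℝ f) x :=
    ((hf.fderiv_right (by exact_mod_cast hn : (1:WithTop ℕ∞) + 1 ≤ n)).differentiable
      one_ne_zero).differentiableAt
  have hs := (hf.contDiffAt (x := x)).isSymmSndFDerivAt (by simpa [minSmoothness_of_isRCLikeNormedField] using hn)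
  have key : ∀ a b : Fin d, pd a (pd b f) x
      = fderiv ℝ (fderiv ℝ f) x (Pi.single a 1) (Pi.single b 1) := by
    intro a b
    show fderiv ℝ (fun y => (fderiv ℝ f y) (Pi.single b 1)) x (Pi.single a 1) = _
    rw [fderiv_clm_apply hd (differentiableAt_const _)]
    simp
  rw [key, key, hs]

lemma psum_eq {ι : Type*} {s : Finset ι} {F G : ι → ℝ} (h : ∀ a ∈ s, F a = G a) :
    ∑ a ∈ s, F a = ∑ a ∈ s, G a := Finset.sum_congr rfl h

lemma psum2_eq {F G : Fin d → Fin d → ℝ} (h : ∀ a b, F a b = G a b) :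
    (∑ a, ∑ b, F a b) = ∑ a, ∑ b, G a b :=
  Finset.sum_congr rfl fun a _ => Finset.sum_congr rfl fun b _ => h a b

lemma pd_mix6 {t1 t2 t3 t4 t5 t6 : (Fin d → ℝ) → ℝ}
    (h1 : DifferentiableAt ℝ t1 x) (h2 : DifferentiableAt ℝ t2 x)
    (h3 : DifferentiableAt ℝ t3 x) (h4 : DifferentiableAt ℝ t4 x)
    (h5 : DifferentiableAt ℝ t5 x) (h6 : DifferentiableAt ℝ t6 x) :
    pd i (fun y => t1 y - t2 y + t3 y - t4 y - t5 y - t6 y) x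
      = pd i t1 x - pd i t2 x + pd i t3 x - pd i t4 x - pd i t5 x - pd i t6 x := by
  rw [pd_sub ((((h1.fun_sub h2).fun_add h3).fun_sub h4).fun_sub h5) h6,
      pd_sub (((h1.fun_sub h2).fun_add h3).fun_sub h4) h5,
      pd_sub ((h1.fun_sub h2).fun_add h3) h4, pd_add (h1.fun_sub h2) h3, pd_sub h1 h2]

lemma pd_mix5 {t1 t2 t3 t4 t5 : (Fin d → ℝ) → ℝ}
    (h1 : DifferentiableAt ℝ t1 x) (h2 : DifferentiableAt ℝ t2 x)
    (h3 : DifferentiableAt ℝ t3 x) (h4 : DifferentiableAt ℝ t4 x)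
    (h5 : DifferentiableAt ℝ t5 x) :
    pd i (fun y => t1 y - t2 y + t3 y + t4 y + t5 y) x
      = pd i t1 x - pd i t2 x + pd i t3 x + pd i t4 x + pd i t5 x := by
  rw [pd_add (((h1.fun_sub h2).fun_add h3).fun_add h4) h5, pd_add ((h1.fun_sub h2).fun_add h3) h4,
      pd_add (h1.fun_sub h2) h3, pd_sub h1 h2]

lemma diff_div {y : Fin d → ℝ} (hf : DifferentiableAt ℝ f y) (hg : DifferentiableAt ℝ g y)
    (h0 : g y ≠ 0) : DifferentiableAt ℝ (fun z => f z / g z) y := by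
  simp only [div_eq_mul_inv]; exact hf.mul (hg.inv h0)

end helpers

set_option maxHeartbeats 4000000

/-- second half of Proposition 2 of the paper.
Given the `O(Δz)`-identity (i) and the `O(Δt)`-identity (ii) obtained from the Taylor
expansion of the update step of the multivariate feedback particle filter, the control
input equation (39) of the paper holds:
`−∇ᵀ((1/p)∇ᵀ(pu)) = ∇ᵀ[ −h²/2 − (1/(2p))Kᵀ∇²pK + (1/2)(Kᵀ∇log p)²
  − Kᵀ(∇Kᵀ)∇log p − ∇ᵀ(∇ᵀK)K − (1/2)tr((∇Kᵀ)²) ]`. -/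
theorem stmt4 {d : ℕ}
    (p : (Fin d → ℝ) → ℝ) (hp : ContDiff ℝ 3 p) (hppos : ∀ x, 0 < p x)
    (K : (Fin d → ℝ) → (Fin d → ℝ)) (hK : ContDiff ℝ 3 K)
    (u : (Fin d → ℝ) → (Fin d → ℝ)) (hu : ContDiff ℝ 2 u)
    (h : (Fin d → ℝ) → ℝ) (hh : ContDiff ℝ 2 h)
    (heqz : ∀ (x : Fin d → ℝ) (j : Fin d),
      0 = p x * ∑ i, K x i * pd i (pd j p) x
        + p x * ∑ i, pd i p x * pd j (fun y => K y i) x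
        + (p x) ^ 2 * pd j h x
        + (p x) ^ 2 * pd j (fun y => ∑ i, pd i (fun z => K z i) y) x
        - (∑ i, pd i p x * K x i) * pd j p x)
    (heqt : ∀ (x : Fin d → ℝ) (j : Fin d),
      0 = p x * ∑ i, u x i * pd i (pd j p) x
        + (p x / 2) * ∑ i, ∑ k, K x i * K x k * pd j (pd i (pd k p)) x
        + p x * ∑ i, pd i p x * pd j (fun y => u y i) x
        + p x * ∑ i, ∑ k, K x i * pd i (pd k p) x * pd j (fun y => K y k) x
        - (p x) ^ 2 * h x * pd j h x
        + p x * (∑ i, pd i p x * K x i) * pd j h x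
        + (p x) ^ 2 * ∑ i, K x i * pd i (pd j h) x
        + (p x) ^ 2 * ∑ i, pd i h x * pd j (fun y => K y i) x
        + p x * (∑ i, pd i p x * K x i) * pd j (fun y => ∑ i, pd i (fun z => K z i) y) x
        + (p x) ^ 2 * (pd j (fun y => ∑ i, pd i (fun z => u z i) y) x
            - ∑ i, ∑ k, pd i (fun y => K y k) x * pd j (pd k (fun y => K y i)) x)
        - (∑ i, pd i p x * u x i) * pd j p x
        - (1 / 2) * (∑ i, ∑ k, K x i * pd i (pd k p) x * K x k) * pd j p x) :
    ∀ (x : Fin d → ℝ) (j : Fin d),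
      - pd j (fun y => (1 / p y) * ∑ i, pd i (fun z => p z * u z i) y) x
        = pd j (fun y =>
            - (1 / 2) * (h y) ^ 2
            - (1 / (2 * p y)) * ∑ i, ∑ k, K y i * K y k * pd i (pd k p) y
            + (1 / 2) * (∑ i, K y i * pd i (fun z => Real.log (p z)) y) ^ 2
            - ∑ i, ∑ k, K y i * pd i (fun z => K z k) y * pd k (fun z => Real.log (p z)) y
            - ∑ k, K y k * pd k (fun z => ∑ i, pd i (fun w => K w i) z) y
            - (1 / 2) * ∑ i, ∑ k, pd i (fun z => K z k) y * pd k (fun z => K z i) y) x := by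
  intro x j
  have hPne : ∀ y, p y ≠ 0 := fun y => (hppos y).ne'
  have hpx : p x ≠ 0 := (hppos x).ne'
  -- smoothness of components
  have hKc : ∀ i, ContDiff ℝ 3 (fun y => K y i) := fun i => contDiff_pi.1 hK i
  have huc : ∀ i, ContDiff ℝ 2 (fun y => u y i) := fun i => contDiff_pi.1 hu i
  -- Clairaut
  have cp : ∀ (a b : Fin d) (y : Fin d → ℝ), pd a (pd b p) y = pd b (pd a p) y :=
    fun a b y => pd_comm hp (by norm_num) a b y
  have ch : ∀ (a b : Fin d) (y : Fin d → ℝ), pd a (pd b h) y = pd b (pd a h) y :=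
    fun a b y => pd_comm hh (by norm_num) a b y
  -- differentiability
  have dP : Differentiable ℝ p := hp.differentiable (by norm_num)
  have dH : Differentiable ℝ h := hh.differentiable (by norm_num)
  have dK : ∀ i, Differentiable ℝ (fun y => K y i) := fun i => (hKc i).differentiable (by norm_num)
  have dU : ∀ i, Differentiable ℝ (fun y => u y i) := fun i => (huc i).differentiable (by norm_num)
  have dP1 : ∀ a, Differentiable ℝ (pd a p) :=
    fun a => (contDiff_pd (m := 2) hp (by norm_num) a).differentiable (by norm_num)
  have dP2 : ∀ a b, Differentiable ℝ (pd a (pd b p)) :=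
    fun a b => (contDiff_pd (m := 1) (contDiff_pd (m := 2) hp (by norm_num) b)
      (by norm_num) a).differentiable (by norm_num)
  have dH1 : ∀ a, Differentiable ℝ (pd a h) :=
    fun a => (contDiff_pd (m := 1) hh (by norm_num) a).differentiable (by norm_num)
  have dK1 : ∀ a b, Differentiable ℝ (pd a (fun y => K y b)) :=
    fun a b => (contDiff_pd (m := 2) (hKc b) (by norm_num) a).differentiable (by norm_num)
  have dK2 : ∀ a b c, Differentiable ℝ (pd a (pd b (fun y => K y c))) :=
    fun a b c => (contDiff_pd (m := 1) (contDiff_pd (m := 2) (hKc c) (by norm_num) b)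
      (by norm_num) a).differentiable (by norm_num)
  have dU1 : ∀ a b, Differentiable ℝ (pd a (fun y => u y b)) :=
    fun a b => (contDiff_pd (m := 1) (huc b) (by norm_num) a).differentiable (by norm_num)
  -- divergence sums as atom sums
  have eDu : pd j (fun y => ∑ i, pd i (fun z => u z i) y) x
      = ∑ i, pd j (pd i (fun z => u z i)) x :=
    pd_sum (fun a _ => ((dU1 a a) x))
  have eDk : ∀ (m : Fin d) (y : Fin d → ℝ), pd m (fun y' => ∑ i, pd i (fun z => K z i) y') y
      = ∑ i, pd m (pd i (fun z => K z i)) y :=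
    fun m y => pd_sum (fun a _ => ((dK1 a a) y))
  have heqtA := heqt x j
  rw [eDu, eDk j x] at heqtA
  have heqzA := heqz x j
  rw [eDk j x] at heqzA
  ------------------------------------------------------------------
  -- LHS expansion
  ------------------------------------------------------------------
  have e1 : (fun y => (1 / p y) * ∑ i, pd i (fun z => p z * u z i) y)
      = fun y => (1 / p y) * ∑ i, (p y * pd i (fun z => u z i) y + pd i p y * u y i) := by
    funext y
    congr 1
    refine psum_eq fun a _ => ?_
    rw [pd_mul (f := p) (g := fun z => u z a) (dP y) ((dU a) y)]
    ring
  have dsum1 : DifferentiableAt ℝ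
      (fun y => ∑ i, (p y * pd i (fun z => u z i) y + pd i p y * u y i)) x :=
    DifferentiableAt.fun_sum fun a _ => ((dP x).fun_mul ((dU1 a a) x)).fun_add (((dP1 a) x).fun_mul ((dU a) x))
  have dinvp : DifferentiableAt ℝ (fun y => 1 / p y) x := by
    simp only [one_div]; exact (dP x).inv (hPne x)
  have Ehp : pd j (fun y => 1 / p y) x = -(pd j p x) / (p x) ^ 2 := by
    rw [pd_div (f := fun _ => (1:ℝ)) (g := p) (differentiableAt_const 1) (dP x) (hPne x),
      pd_const]
    ring
  have E1 : pd j (fun y => ∑ i, (p y * pd i (fun z => u z i) y + pd i p y * u y i)) x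
      = p x * (∑ i, pd j (pd i (fun z => u z i)) x) + pd j p x * (∑ i, pd i (fun z => u z i) x)
        + ((∑ i, u x i * pd i (pd j p) x) + ∑ i, pd i p x * pd j (fun y => u y i) x) := by
    rw [pd_sum (fun a _ => ((dP x).fun_mul ((dU1 a a) x)).fun_add (((dP1 a) x).fun_mul ((dU a) x)))]
    rw [Finset.mul_sum, Finset.mul_sum]
    rw [← Finset.sum_add_distrib, ← Finset.sum_add_distrib, ← Finset.sum_add_distrib]
    refine psum_eq fun a _ => ?_
    rw [pd_add ((dP x).fun_mul ((dU1 a a) x)) (((dP1 a) x).fun_mul ((dU a) x)),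
        pd_mul (dP x) ((dU1 a a) x), pd_mul ((dP1 a) x) ((dU a) x), cp j a x]
    ring
  have vg : (∑ i, (p x * pd i (fun z => u z i) x + pd i p x * u x i))
      = p x * (∑ i, pd i (fun z => u z i) x) + ∑ i, pd i p x * u x i := by
    rw [Finset.sum_add_distrib, Finset.mul_sum]
  have hL3 : (p x) ^ 2 * pd j (fun y => (1 / p y) * ∑ i, pd i (fun z => p z * u z i) y) x
      = (p x) ^ 2 * (∑ i, pd j (pd i (fun z => u z i)) x)
        + p x * ((∑ i, u x i * pd i (pd j p) x) + ∑ i, pd i p x * pd j (fun y => u y i) x)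
        - (∑ i, pd i p x * u x i) * pd j p x := by
    rw [e1, pd_mul dinvp dsum1, E1, Ehp, vg]
    field_simp
    ring
  ------------------------------------------------------------------
  -- RHS : rewrite G into division-free-log form
  ------------------------------------------------------------------
  have r2 : ∀ y : Fin d → ℝ, (∑ i, ∑ k, K y i * K y k * pd i (pd k p) y)
      = ∑ i, ∑ k, K y i * pd i (pd k p) y * K y k :=
    fun y => psum2_eq fun a b => by ring
  have r3 : ∀ y : Fin d → ℝ, (∑ i, K y i * pd i (fun z => Real.log (p z)) y)
      = (∑ i, pd i p y * K y i) / p y := fun y => by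
    rw [Finset.sum_div]
    refine psum_eq fun a _ => ?_
    rw [pd_log (dP y) (hPne y)]
    ring
  have r4 : ∀ y : Fin d → ℝ,
      (∑ i, ∑ k, K y i * pd i (fun z => K z k) y * pd k (fun z => Real.log (p z)) y)
      = (∑ i, ∑ k, K y i * pd i (fun z => K z k) y * pd k p y) / p y := fun y => by
    rw [Finset.sum_div]
    refine psum_eq fun a _ => ?_
    rw [Finset.sum_div]
    refine psum_eq fun b _ => ?_
    rw [pd_log (dP y) (hPne y)]
    ring
  have r5 : ∀ y : Fin d → ℝ, (∑ k, K y k * pd k (fun z => ∑ i, pd i (fun w => K w i) z) y)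
      = ∑ k, ∑ i, K y k * pd k (pd i (fun z => K z i)) y := fun y => by
    refine psum_eq fun a _ => ?_
    rw [pd_sum (fun b _ => ((dK1 b b) y)), Finset.mul_sum]
  have hG1 : (fun y =>
            - (1 / 2) * (h y) ^ 2
            - (1 / (2 * p y)) * ∑ i, ∑ k, K y i * K y k * pd i (pd k p) y
            + (1 / 2) * (∑ i, K y i * pd i (fun z => Real.log (p z)) y) ^ 2
            - ∑ i, ∑ k, K y i * pd i (fun z => K z k) y * pd k (fun z => Real.log (p z)) y
            - ∑ k, K y k * pd k (fun z => ∑ i, pd i (fun w => K w i) z) y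
            - (1 / 2) * ∑ i, ∑ k, pd i (fun z => K z k) y * pd k (fun z => K z i) y)
      = (fun y =>
            - (1 / 2) * (h y) ^ 2
            - (1 / (2 * p y)) * ∑ i, ∑ k, K y i * pd i (pd k p) y * K y k
            + (1 / 2) * ((∑ i, pd i p y * K y i) / p y) ^ 2
            - (∑ i, ∑ k, K y i * pd i (fun z => K z k) y * pd k p y) / p y
            - ∑ k, ∑ i, K y k * pd k (pd i (fun z => K z i)) y
            - (1 / 2) * ∑ i, ∑ k, pd i (fun z => K z k) y * pd k (fun z => K z i) y) := by
    funext y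
    rw [r2 y, r3 y, r4 y, r5 y]
  -- differentiability of the six pieces
  have dSf : DifferentiableAt ℝ (fun y => ∑ i, ∑ k, K y i * pd i (pd k p) y * K y k) x :=
    DifferentiableAt.fun_sum fun a _ => DifferentiableAt.fun_sum fun b _ =>
      (((dK a) x).fun_mul ((dP2 a b) x)).fun_mul ((dK b) x)
  have dN : DifferentiableAt ℝ (fun y => ∑ i, pd i p y * K y i) x :=
    DifferentiableAt.fun_sum fun a _ => ((dP1 a) x).fun_mul ((dK a) x)
  have dA : DifferentiableAt ℝ
      (fun y => ∑ i, ∑ k, K y i * pd i (fun z => K z k) y * pd k p y) x :=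
    DifferentiableAt.fun_sum fun a _ => DifferentiableAt.fun_sum fun b _ =>
      (((dK a) x).fun_mul ((dK1 a b) x)).fun_mul ((dP1 b) x)
  have dB : DifferentiableAt ℝ (fun y => ∑ k, ∑ i, K y k * pd k (pd i (fun z => K z i)) y) x :=
    DifferentiableAt.fun_sum fun a _ => DifferentiableAt.fun_sum fun b _ =>
      ((dK a) x).fun_mul ((dK2 a b b) x)
  have dC : DifferentiableAt ℝ
      (fun y => ∑ i, ∑ k, pd i (fun z => K z k) y * pd k (fun z => K z i) y) x :=
    DifferentiableAt.fun_sum fun a _ => DifferentiableAt.fun_sum fun b _ =>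
      ((dK1 a b) x).fun_mul ((dK1 b a) x)
  have dKH : DifferentiableAt ℝ (fun y => ∑ i, K y i * pd i h y) x :=
    DifferentiableAt.fun_sum fun a _ => ((dK a) x).fun_mul ((dH1 a) x)
  have d2p : DifferentiableAt ℝ (fun y => 1 / (2 * p y)) x := by
    simp only [one_div]
    exact ((differentiableAt_const (2:ℝ)).mul (dP x)).inv (mul_ne_zero two_ne_zero (hPne x))
  have dphi : DifferentiableAt ℝ (fun y => (∑ i, pd i p y * K y i) / p y) x :=
    diff_div dN (dP x) (hPne x)
  have dt1 : DifferentiableAt ℝ (fun y => - (1 / 2) * (h y) ^ 2) x :=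
    (differentiableAt_const _).mul ((dH x).pow 2)
  have dt2 : DifferentiableAt ℝ
      (fun y => (1 / (2 * p y)) * ∑ i, ∑ k, K y i * pd i (pd k p) y * K y k) x :=
    d2p.mul dSf
  have dt3 : DifferentiableAt ℝ
      (fun y => (1 / 2) * ((∑ i, pd i p y * K y i) / p y) ^ 2) x :=
    (differentiableAt_const _).mul (dphi.pow 2)
  have dt4 : DifferentiableAt ℝ
      (fun y => (∑ i, ∑ k, K y i * pd i (fun z => K z k) y * pd k p y) / p y) x :=
    diff_div dA (dP x) (hPne x)
  have dt6 : DifferentiableAt ℝ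
      (fun y => (1 / 2) * ∑ i, ∑ k, pd i (fun z => K z k) y * pd k (fun z => K z i) y) x :=
    (differentiableAt_const _).mul dC
  ------------------------------------------------------------------
  -- expansions of the basic sums
  ------------------------------------------------------------------
  have ES : pd j (fun y => ∑ i, ∑ k, K y i * pd i (pd k p) y * K y k) x
      = (∑ i, ∑ k, K x i * K x k * pd j (pd i (pd k p)) x)
        + 2 * ∑ i, ∑ k, K x i * pd i (pd k p) x * pd j (fun y => K y k) x := by
    rw [pd_sum2 (fun a b => (((dK a) x).fun_mul ((dP2 a b) x)).fun_mul ((dK b) x))]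
    have step : ∀ a b : Fin d, pd j (fun y => K y a * pd a (pd b p) y * K y b) x
        = K x a * K x b * pd j (pd a (pd b p)) x
          + K x a * pd a (pd b p) x * pd j (fun y => K y b) x
          + K x b * pd a (pd b p) x * pd j (fun y => K y a) x := fun a b => by
      rw [pd_mul3 ((dK a) x) ((dP2 a b) x) ((dK b) x)]; ring
    rw [psum2_eq step]
    simp only [Finset.sum_add_distrib]
    have br : (∑ a, ∑ b, K x b * pd a (pd b p) x * pd j (fun y => K y a) x)
        = ∑ i, ∑ k, K x i * pd i (pd k p) x * pd j (fun y => K y k) x := by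
      rw [Finset.sum_comm]
      exact psum2_eq fun a b => by rw [cp b a x]
    rw [br]
    ring
  have EN : pd j (fun y => ∑ i, pd i p y * K y i) x
      = (∑ i, K x i * pd i (pd j p) x) + ∑ i, pd i p x * pd j (fun y => K y i) x := by
    rw [pd_sum (fun a _ => ((dP1 a) x).fun_mul ((dK a) x)), ← Finset.sum_add_distrib]
    refine psum_eq fun a _ => ?_
    rw [pd_mul ((dP1 a) x) ((dK a) x), cp j a x]
    ring
  have EKH : pd j (fun y => ∑ i, K y i * pd i h y) x
      = (∑ i, K x i * pd i (pd j h) x) + ∑ i, pd i h x * pd j (fun y => K y i) x := by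
    rw [pd_sum (fun a _ => ((dK a) x).fun_mul ((dH1 a) x)), ← Finset.sum_add_distrib]
    refine psum_eq fun a _ => ?_
    rw [pd_mul ((dK a) x) ((dH1 a) x), ch j a x]
  have EA : pd j (fun y => ∑ i, ∑ k, K y i * pd i (fun z => K z k) y * pd k p y) x
      = (∑ i, ∑ k, K x i * pd i (fun z => K z k) x * pd k (pd j p) x)
        + ((∑ i, ∑ k, K x i * pd j (pd i (fun z => K z k)) x * pd k p x)
        + ∑ i, ∑ k, pd j (fun y => K y i) x * pd i (fun z => K z k) x * pd k p x) := by
    rw [pd_sum2 (fun a b => (((dK a) x).fun_mul ((dK1 a b) x)).fun_mul ((dP1 b) x))]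
    have step : ∀ a b : Fin d, pd j (fun y => K y a * pd a (fun z => K z b) y * pd b p y) x
        = K x a * pd a (fun z => K z b) x * pd b (pd j p) x
          + (K x a * pd j (pd a (fun z => K z b)) x * pd b p x
          + pd j (fun y => K y a) x * pd a (fun z => K z b) x * pd b p x) := fun a b => by
      rw [pd_mul3 ((dK a) x) ((dK1 a b) x) ((dP1 b) x), cp j b x]
      ring
    rw [psum2_eq step]
    simp only [Finset.sum_add_distrib]
  have EB : pd j (fun y => ∑ k, ∑ i, K y k * pd k (pd i (fun z => K z i)) y) x
      = (∑ k, ∑ i, K x k * pd j (pd k (pd i (fun z => K z i))) x)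
        + ∑ k, ∑ i, pd k (pd i (fun z => K z i)) x * pd j (fun y => K y k) x := by
    rw [pd_sum2 (fun a b => ((dK a) x).fun_mul ((dK2 a b b) x))]
    have step : ∀ a b : Fin d, pd j (fun y => K y a * pd a (pd b (fun z => K z b)) y) x
        = K x a * pd j (pd a (pd b (fun z => K z b))) x
          + pd a (pd b (fun z => K z b)) x * pd j (fun y => K y a) x := fun a b => by
      rw [pd_mul ((dK a) x) ((dK2 a b b) x)]
    rw [psum2_eq step]
    simp only [Finset.sum_add_distrib]
  have EC : pd j (fun y => ∑ i, ∑ k, pd i (fun z => K z k) y * pd k (fun z => K z i) y) x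
      = 2 * ∑ i, ∑ k, pd i (fun z => K z k) x * pd j (pd k (fun z => K z i)) x := by
    rw [pd_sum2 (fun a b => ((dK1 a b) x).fun_mul ((dK1 b a) x))]
    have step : ∀ a b : Fin d,
        pd j (fun y => pd a (fun z => K z b) y * pd b (fun z => K z a) y) x
        = pd a (fun z => K z b) x * pd j (pd b (fun z => K z a)) x
          + pd b (fun z => K z a) x * pd j (pd a (fun z => K z b)) x := fun a b => by
      rw [pd_mul ((dK1 a b) x) ((dK1 b a) x)]
    rw [psum2_eq step]
    simp only [Finset.sum_add_distrib]
    have br : (∑ a, ∑ b, pd b (fun z => K z a) x * pd j (pd a (fun z => K z b)) x)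
        = ∑ i, ∑ k, pd i (fun z => K z k) x * pd j (pd k (fun z => K z i)) x := by
      rw [Finset.sum_comm]
    rw [br]
    ring
  have Ehp2 : pd j (fun y => 1 / (2 * p y)) x = -(pd j p x) / (2 * (p x) ^ 2) := by
    rw [pd_div (f := fun _ => (1:ℝ)) (g := fun y => 2 * p y) (differentiableAt_const 1)
        ((differentiableAt_const (2:ℝ)).fun_mul (dP x)) (mul_ne_zero two_ne_zero (hPne x)),
      pd_const, pd_cmul (dP x)]
    field_simp
    ring
  have Ephi : pd j (fun y => (∑ i, pd i p y * K y i) / p y) x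
      = (((∑ i, K x i * pd i (pd j p) x) + ∑ i, pd i p x * pd j (fun y => K y i) x) * p x
          - (∑ i, pd i p x * K x i) * pd j p x) / (p x) ^ 2 := by
    rw [pd_div dN (dP x) (hPne x), EN]
  ------------------------------------------------------------------
  -- RHS expansion (multiplied by p³)
  ------------------------------------------------------------------
  have hR3 : (p x) ^ 3 * pd j (fun y =>
            - (1 / 2) * (h y) ^ 2
            - (1 / (2 * p y)) * ∑ i, ∑ k, K y i * K y k * pd i (pd k p) y
            + (1 / 2) * (∑ i, K y i * pd i (fun z => Real.log (p z)) y) ^ 2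
            - ∑ i, ∑ k, K y i * pd i (fun z => K z k) y * pd k (fun z => Real.log (p z)) y
            - ∑ k, K y k * pd k (fun z => ∑ i, pd i (fun w => K w i) z) y
            - (1 / 2) * ∑ i, ∑ k, pd i (fun z => K z k) y * pd k (fun z => K z i) y) x
      = - (p x) ^ 3 * (h x * pd j h x)
        - ((p x) ^ 2 / 2) * ((∑ i, ∑ k, K x i * K x k * pd j (pd i (pd k p)) x)
            + 2 * ∑ i, ∑ k, K x i * pd i (pd k p) x * pd j (fun y => K y k) x)
        + (p x / 2) * (∑ i, ∑ k, K x i * pd i (pd k p) x * K x k) * pd j p x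
        + (∑ i, pd i p x * K x i)
            * (((∑ i, K x i * pd i (pd j p) x) + ∑ i, pd i p x * pd j (fun y => K y i) x) * p x
                - (∑ i, pd i p x * K x i) * pd j p x)
        - p x * (((∑ i, ∑ k, K x i * pd i (fun z => K z k) x * pd k (pd j p) x)
            + ((∑ i, ∑ k, K x i * pd j (pd i (fun z => K z k)) x * pd k p x)
            + ∑ i, ∑ k, pd j (fun y => K y i) x * pd i (fun z => K z k) x * pd k p x)) * p x
            - (∑ i, ∑ k, K x i * pd i (fun z => K z k) x * pd k p x) * pd j p x)
        - (p x) ^ 3 * ((∑ k, ∑ i, K x k * pd j (pd k (pd i (fun z => K z i))) x)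
            + ∑ k, ∑ i, pd k (pd i (fun z => K z i)) x * pd j (fun y => K y k) x)
        - (p x) ^ 3 * (∑ i, ∑ k, pd i (fun z => K z k) x * pd j (pd k (fun z => K z i)) x) := by
    rw [hG1, pd_mix6 dt1 dt2 dt3 dt4 dB dt6]
    rw [pd_cmul ((dH x).fun_pow 2), pd_sq (dH x)]
    rw [pd_mul d2p dSf, ES, Ehp2]
    rw [pd_cmul (dphi.fun_pow 2), pd_sq dphi, Ephi]
    rw [pd_div dA (dP x) (hPne x), EA]
    rw [EB]
    rw [pd_cmul dC, EC]
    field_simp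
    ring
  ------------------------------------------------------------------
  -- the auxiliary function W̃ := p·S − N² + p²·⟨K,∇h⟩ + p·A + p²·B vanishes identically
  ------------------------------------------------------------------
  have hW0 : ∀ y : Fin d → ℝ,
      p y * (∑ i, ∑ k, K y i * pd i (pd k p) y * K y k)
        - (∑ i, pd i p y * K y i) ^ 2
        + (p y) ^ 2 * (∑ i, K y i * pd i h y)
        + p y * (∑ i, ∑ k, K y i * pd i (fun z => K z k) y * pd k p y)
        + (p y) ^ 2 * (∑ k, ∑ i, K y k * pd k (pd i (fun z => K z i)) y) = 0 := by
    intro y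
    have hz : ∀ m : Fin d, (0:ℝ) = p y * ∑ i, K y i * pd i (pd m p) y
        + p y * ∑ i, pd i p y * pd m (fun z => K z i) y
        + (p y) ^ 2 * pd m h y
        + (p y) ^ 2 * (∑ i, pd m (pd i (fun z => K z i)) y)
        - (∑ i, pd i p y * K y i) * pd m p y := fun m => by
      have hm := heqz y m
      rwa [eDk m y] at hm
    have m1 : (∑ m, K y m * (p y * ∑ i, K y i * pd i (pd m p) y))
        = p y * ∑ i, ∑ k, K y i * pd i (pd k p) y * K y k := by
      simp only [Finset.mul_sum]
      rw [Finset.sum_comm]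
      exact psum2_eq fun a b => by ring
    have m2 : (∑ m, K y m * (p y * ∑ i, pd i p y * pd m (fun z => K z i) y))
        = p y * ∑ i, ∑ k, K y i * pd i (fun z => K z k) y * pd k p y := by
      simp only [Finset.mul_sum]
      exact psum2_eq fun a b => by ring
    have m3 : (∑ m, K y m * ((p y) ^ 2 * pd m h y))
        = (p y) ^ 2 * ∑ i, K y i * pd i h y := by
      simp only [Finset.mul_sum]
      exact psum_eq fun a _ => by ring
    have m4 : (∑ m, K y m * ((p y) ^ 2 * ∑ i, pd m (pd i (fun z => K z i)) y))
        = (p y) ^ 2 * ∑ k, ∑ i, K y k * pd k (pd i (fun z => K z i)) y := by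
      simp only [Finset.mul_sum]
      exact psum2_eq fun a b => by ring
    have m5 : (∑ m, K y m * ((∑ i, pd i p y * K y i) * pd m p y))
        = (∑ i, pd i p y * K y i) ^ 2 := by
      calc (∑ m, K y m * ((∑ i, pd i p y * K y i) * pd m p y))
          = ∑ m, (∑ i, pd i p y * K y i) * (pd m p y * K y m) :=
            psum_eq fun m _ => by ring
        _ = (∑ i, pd i p y * K y i) * ∑ m, pd m p y * K y m := by rw [← Finset.mul_sum]
        _ = (∑ i, pd i p y * K y i) ^ 2 := by rw [sq]
    have keyW : p y * (∑ i, ∑ k, K y i * pd i (pd k p) y * K y k)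
        - (∑ i, pd i p y * K y i) ^ 2
        + (p y) ^ 2 * (∑ i, K y i * pd i h y)
        + p y * (∑ i, ∑ k, K y i * pd i (fun z => K z k) y * pd k p y)
        + (p y) ^ 2 * (∑ k, ∑ i, K y k * pd k (pd i (fun z => K z i)) y)
        = ∑ m, K y m * (p y * ∑ i, K y i * pd i (pd m p) y
            + p y * ∑ i, pd i p y * pd m (fun z => K z i) y
            + (p y) ^ 2 * pd m h y
            + (p y) ^ 2 * (∑ i, pd m (pd i (fun z => K z i)) y)
            - (∑ i, pd i p y * K y i) * pd m p y) := by
      simp only [mul_add, mul_sub, Finset.sum_add_distrib, Finset.sum_sub_distrib]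
      rw [m1, m2, m3, m4, m5]
      ring
    rw [keyW]
    calc (∑ m, K y m * (p y * ∑ i, K y i * pd i (pd m p) y
            + p y * ∑ i, pd i p y * pd m (fun z => K z i) y
            + (p y) ^ 2 * pd m h y
            + (p y) ^ 2 * (∑ i, pd m (pd i (fun z => K z i)) y)
            - (∑ i, pd i p y * K y i) * pd m p y))
        = ∑ m : Fin d, K y m * 0 := psum_eq fun m _ => by rw [← hz m]
      _ = 0 := by simp
  have hWxA := hW0 x
  ------------------------------------------------------------------
  -- derivative of W̃ at x
  ------------------------------------------------------------------
  have hWd : pd j (fun y =>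
        p y * (∑ i, ∑ k, K y i * pd i (pd k p) y * K y k)
        - (∑ i, pd i p y * K y i) ^ 2
        + (p y) ^ 2 * (∑ i, K y i * pd i h y)
        + p y * (∑ i, ∑ k, K y i * pd i (fun z => K z k) y * pd k p y)
        + (p y) ^ 2 * (∑ k, ∑ i, K y k * pd k (pd i (fun z => K z i)) y)) x = 0 := by
    have e0 : (fun y =>
        p y * (∑ i, ∑ k, K y i * pd i (pd k p) y * K y k)
        - (∑ i, pd i p y * K y i) ^ 2
        + (p y) ^ 2 * (∑ i, K y i * pd i h y)
        + p y * (∑ i, ∑ k, K y i * pd i (fun z => K z k) y * pd k p y)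
        + (p y) ^ 2 * (∑ k, ∑ i, K y k * pd k (pd i (fun z => K z i)) y))
        = fun _ => (0:ℝ) := funext fun y => hW0 y
    rw [e0, pd_const]
  have hWexp : pd j (fun y =>
        p y * (∑ i, ∑ k, K y i * pd i (pd k p) y * K y k)
        - (∑ i, pd i p y * K y i) ^ 2
        + (p y) ^ 2 * (∑ i, K y i * pd i h y)
        + p y * (∑ i, ∑ k, K y i * pd i (fun z => K z k) y * pd k p y)
        + (p y) ^ 2 * (∑ k, ∑ i, K y k * pd k (pd i (fun z => K z i)) y)) x
      = (p x * ((∑ i, ∑ k, K x i * K x k * pd j (pd i (pd k p)) x)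
            + 2 * ∑ i, ∑ k, K x i * pd i (pd k p) x * pd j (fun y => K y k) x)
          + (∑ i, ∑ k, K x i * pd i (pd k p) x * K x k) * pd j p x)
        - 2 * (∑ i, pd i p x * K x i)
            * ((∑ i, K x i * pd i (pd j p) x) + ∑ i, pd i p x * pd j (fun y => K y i) x)
        + ((p x) ^ 2 * ((∑ i, K x i * pd i (pd j h) x)
              + ∑ i, pd i h x * pd j (fun y => K y i) x)
          + (∑ i, K x i * pd i h x) * (2 * p x * pd j p x))
        + (p x * ((∑ i, ∑ k, K x i * pd i (fun z => K z k) x * pd k (pd j p) x)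
            + ((∑ i, ∑ k, K x i * pd j (pd i (fun z => K z k)) x * pd k p x)
            + ∑ i, ∑ k, pd j (fun y => K y i) x * pd i (fun z => K z k) x * pd k p x))
          + (∑ i, ∑ k, K x i * pd i (fun z => K z k) x * pd k p x) * pd j p x)
        + ((p x) ^ 2 * ((∑ k, ∑ i, K x k * pd j (pd k (pd i (fun z => K z i))) x)
            + ∑ k, ∑ i, pd k (pd i (fun z => K z i)) x * pd j (fun y => K y k) x)
          + (∑ k, ∑ i, K x k * pd k (pd i (fun z => K z i)) x) * (2 * p x * pd j p x)) := by
    rw [pd_mix5 ((dP x).fun_mul dSf) (dN.fun_pow 2) (((dP x).fun_pow 2).fun_mul dKH) ((dP x).fun_mul dA)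
        (((dP x).fun_pow 2).fun_mul dB)]
    rw [pd_mul (dP x) dSf, ES]
    rw [pd_sq dN, EN]
    rw [pd_mul ((dP x).fun_pow 2) dKH, EKH]
    rw [pd_mul (dP x) dA, EA]
    rw [pd_mul ((dP x).fun_pow 2) dB, EB]
    rw [pd_sq (dP x)]
  have hW2A := hWexp.symm.trans hWd
  ------------------------------------------------------------------
  -- final assembly
  ------------------------------------------------------------------
  have final3 : (p x) ^ 3 * (- pd j (fun y => (1 / p y) * ∑ i, pd i (fun z => p z * u z i) y) x)
      = (p x) ^ 3 * pd j (fun y =>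
            - (1 / 2) * (h y) ^ 2
            - (1 / (2 * p y)) * ∑ i, ∑ k, K y i * K y k * pd i (pd k p) y
            + (1 / 2) * (∑ i, K y i * pd i (fun z => Real.log (p z)) y) ^ 2
            - ∑ i, ∑ k, K y i * pd i (fun z => K z k) y * pd k (fun z => Real.log (p z)) y
            - ∑ k, K y k * pd k (fun z => ∑ i, pd i (fun w => K w i) z) y
            - (1 / 2) * ∑ i, ∑ k, pd i (fun z => K z k) y * pd k (fun z => K z i) y) x := by
    linear_combination (-(p x)) * hL3 - hR3 + (p x) * heqtA + (p x) * hW2A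
      - 2 * pd j p x * hWxA - (∑ i, pd i p x * K x i) * heqzA
  exact mul_left_cancel₀ (pow_ne_zero 3 (hPne x)) final3
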